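/- Let P be a polynomial over F₂ with P(0) = 1, suppose D := ord(P) ≥ 4, and let P* be the polynomial with P·P* = 1 + q^D. Let P̄ and P̄* denote the reciprocal sets of P and P* respectively. Then min{δ(P̄), δ(P̄*)} ≤ 1/2, i.e. at least one of the two natural densities is at most 1/2. -/

import Mathlib

open Finset Filter

lemma density_periodic (h : ℕ → Prop) [DecidablePred h] (D : ℕ) (hD : 0 < D)
    (hper : ∀ n, 1 ≤ n → (h (n + D) ↔ h n)) :
    Tendsto (fun n : ℕ => ((((range (n+1)).filter h).card : ℝ)) / (n+1)) atTop
      (nhds ((((Icc 1 D).filter h).card : ℝ) / D)) := by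
  set c : ℕ := ((Icc 1 D).filter h).card with hc
  -- window sums
  have hwin : ∀ m, 1 ≤ m → ∑ i ∈ Ico m (m + D), (if h i then 1 else 0) = c := by
    intro m hm
    induction m with
    | zero => omega
    | succ m ih =>
      rcases Nat.eq_or_lt_of_le hm with hm1 | hm1
      · have : m = 0 := by omega
        subst this
        rw [hc, Finset.card_filter, ← Finset.Ico_add_one_right_eq_Icc]
        simp [Nat.add_comm]
      · have hm' : 1 ≤ m := by omega
        have key := ih hm'
        have e1 : ∑ i ∈ Ico (m+1) (m+1+D), (if h i then 1 else 0)
            = (∑ i ∈ Ico (m+1) (m+D), (if h i then 1 else 0)) + (if h (m+D) then 1 else 0) := by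
          have hmd : m+1+D = (m+D)+1 := by omega
          rw [hmd, Finset.sum_Ico_succ_top (by omega)]
        have e2 : ∑ i ∈ Ico m (m+D), (if h i then 1 else 0)
            = (if h m then 1 else 0) + ∑ i ∈ Ico (m+1) (m+D), (if h i then 1 else 0) :=
          Finset.sum_eq_sum_Ico_succ_bot (by omega) _
        have e3 : (if h (m+D) then (1:ℕ) else 0) = if h m then 1 else 0 := by
          by_cases hx : h m
          · rw [if_pos hx, if_pos ((hper m hm').2 hx)]
          · rw [if_neg hx, if_neg (fun hh => hx ((hper m hm').1 hh))]
        omega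
  have hF : ∀ m, 1 ≤ m → ((range (m + D)).filter h).card = ((range m).filter h).card + c := by
    intro m hm
    rw [Finset.card_filter, Finset.card_filter]
    simp only [Finset.range_eq_Ico]
    rw [← Finset.sum_Ico_consecutive (fun i => if h i then 1 else 0)
      (Nat.zero_le m) (by omega : m ≤ m + D), hwin m hm]
  set E : ℕ → ℝ := fun m => (((range m).filter h).card : ℝ) - c * m / D with hE
  have hDne : (D : ℝ) ≠ 0 := Nat.cast_ne_zero.mpr (by omega)
  have hEper : ∀ m, 1 ≤ m → E (m + D) = E m := by
    intro m hm
    simp only [hE, hF m hm]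
    push_cast
    field_simp
    ring
  have hEbound : ∀ m, 1 ≤ m → ∃ r, r ∈ Icc 1 D ∧ E m = E r := by
    intro m
    induction m using Nat.strong_induction_on with
    | _ m ih =>
      intro hm
      by_cases hmD : m ≤ D
      · exact ⟨m, Finset.mem_Icc.mpr ⟨hm, hmD⟩, rfl⟩
      · have h1 : 1 ≤ m - D := by omega
        obtain ⟨r, hr, he⟩ := ih (m - D) (by omega) h1
        refine ⟨r, hr, ?_⟩
        have hmm : m = (m - D) + D := by omega
        rw [hmm, hEper _ h1, he]
  obtain ⟨M, hM⟩ : ∃ M : ℝ, ∀ m, 1 ≤ m → |E m| ≤ M := by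
    refine ⟨((Icc 1 D).image (fun r => |E r|)).max'
      ⟨|E 1|, Finset.mem_image_of_mem _ (Finset.mem_Icc.mpr ⟨le_refl 1, hD⟩)⟩,
      fun m hm => ?_⟩
    obtain ⟨r, hr, he⟩ := hEbound m hm
    rw [he]
    exact Finset.le_max' _ (|E r|) (Finset.mem_image_of_mem (fun r => |E r|) hr)
  have hb : Tendsto (fun n : ℕ => M / ((n:ℝ)+1)) atTop (nhds 0) := by
    have h1 := (tendsto_const_div_atTop_nhds_zero_nat M).comp (tendsto_add_atTop_nat 1)
    have heq : ∀ n : ℕ, (fun n : ℕ => M / (n:ℝ)) ((fun a => a + 1) n) = M / ((n:ℝ)+1) := by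
      intro n; push_cast; ring_nf
    exact Tendsto.congr heq h1
  have htend0 : Tendsto (fun n : ℕ => E (n+1) / ((n:ℝ)+1)) atTop (nhds 0) := by
    apply squeeze_zero_norm _ hb
    intro n
    have hpos : (0:ℝ) < (n:ℝ)+1 := by positivity
    rw [Real.norm_eq_abs, abs_div, abs_of_pos hpos]
    gcongr
    exact hM (n+1) (by omega)
  have heq : ∀ n : ℕ, (((range (n+1)).filter h).card : ℝ) / ((n:ℝ)+1)
      = c / D + E (n+1) / ((n:ℝ)+1) := by
    intro n
    have hpos : ((n:ℝ)+1) ≠ 0 := by positivity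
    simp only [hE]
    push_cast
    field_simp
    ring
  have hfin := (tendsto_const_nhds (x := (c:ℝ)/D) (f := atTop (α := ℕ))).add htend0
  rw [add_zero] at hfin
  exact Tendsto.congr (fun n => (heq n).symm) hfin

lemma zmod2_eq_one (x : ZMod 2) (hx : x ≠ 0) : x = 1 := by
  revert hx; revert x; decide

lemma ps_helper (A B : Polynomial (ZMod 2)) (D : ℕ) (hD : 1 ≤ D)
    (hAB : A * B = 1 + Polynomial.X ^ D) (G : PowerSeries (ZMod 2))
    (hG : (A : PowerSeries (ZMod 2)) * G = 1) :
    (∀ n, 1 ≤ n → (PowerSeries.coeff (n + D) G = 1 ↔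
      PowerSeries.coeff n G = 1))
    ∧ ((Finset.Icc 1 D).filter
        (fun k => PowerSeries.coeff k G = 1)).card ≤ B.support.card := by
  have hne : (1 + Polynomial.X ^ D : Polynomial (ZMod 2)) ≠ 0 := by
    intro hzero
    have h0 : (1 + Polynomial.X ^ D : Polynomial (ZMod 2)).coeff 0 = 1 := by
      simp [Polynomial.coeff_X_pow]
      omega
    rw [hzero] at h0
    simp at h0
  have hBne : B ≠ 0 := by
    intro hzero; rw [hzero, mul_zero] at hAB; exact hne hAB.symm
  have hdegB : B.natDegree ≤ D := by
    have hdvd : B ∣ (1 + Polynomial.X ^ D) := ⟨A, by rw [← hAB]; ring⟩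
    have := Polynomial.natDegree_le_of_dvd hdvd hne
    rwa [add_comm, ← Polynomial.C_1, Polynomial.natDegree_X_pow_add_C] at this
  have key : (B : PowerSeries (ZMod 2)) = G + PowerSeries.X ^ D * G := by
    have h2 : ((A * B : Polynomial (ZMod 2)) : PowerSeries (ZMod 2))
        = 1 + PowerSeries.X ^ D := by
      rw [hAB, Polynomial.coe_add, Polynomial.coe_one, Polynomial.coe_pow, Polynomial.coe_X]
    calc (B : PowerSeries (ZMod 2)) = ((A : PowerSeries (ZMod 2)) * G) * B := by
          rw [hG, one_mul]
      _ = ((A * B : Polynomial (ZMod 2)) : PowerSeries (ZMod 2)) * G := by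
          rw [Polynomial.coe_mul]; ring
      _ = (1 + PowerSeries.X ^ D) * G := by rw [h2]
      _ = G + PowerSeries.X ^ D * G := by ring
  have hcoeff : ∀ n : ℕ, B.coeff n = PowerSeries.coeff n G +
      (if D ≤ n then PowerSeries.coeff (n - D) G else 0) := by
    intro n
    rw [← Polynomial.coeff_coe, key, map_add, PowerSeries.coeff_X_pow_mul']
  have hper : ∀ n, 1 ≤ n → PowerSeries.coeff (n + D) G
      = PowerSeries.coeff n G := by
    intro n hn
    have hB0 : B.coeff (n + D) = 0 :=
      Polynomial.coeff_eq_zero_of_natDegree_lt (by omega)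
    have := hcoeff (n + D)
    rw [hB0, if_pos (by omega : D ≤ n + D)] at this
    simp only [Nat.add_sub_cancel] at this
    have h2 := eq_neg_of_add_eq_zero_left this.symm
    rwa [CharTwo.neg_eq] at h2
  refine ⟨fun n hn => by rw [hper n hn], ?_⟩
  -- card bound
  have h0supp : (0 : ℕ) ∈ B.support := by
    rw [Polynomial.mem_support_iff]
    intro hB0
    have := congrArg (fun p => Polynomial.coeff p 0) hAB
    simp only [Polynomial.mul_coeff_zero, hB0, mul_zero] at this
    have h1 : (1 + Polynomial.X ^ D : Polynomial (ZMod 2)).coeff 0 = 1 := by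
      simp [Polynomial.coeff_X_pow]
      omega
    rw [h1] at this
    exact one_ne_zero this.symm
  have hsub : (Finset.Icc 1 D).filter
      (fun k => PowerSeries.coeff k G = 1) ⊆ insert D (B.support.erase 0) := by
    intro k hk
    rw [Finset.mem_filter, Finset.mem_Icc] at hk
    obtain ⟨⟨hk1, hkD⟩, hkG⟩ := hk
    rcases Nat.eq_or_lt_of_le hkD with rfl | hklt
    · exact Finset.mem_insert_self _ _
    · apply Finset.mem_insert_of_mem
      rw [Finset.mem_erase]
      refine ⟨by omega, ?_⟩
      rw [Polynomial.mem_support_iff]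
      have := hcoeff k
      rw [if_neg (by omega), add_zero, hkG] at this
      rw [this]; exact one_ne_zero
  calc ((Finset.Icc 1 D).filter (fun k => PowerSeries.coeff k G = 1)).card
      ≤ (insert D (B.support.erase 0)).card := Finset.card_le_card hsub
    _ ≤ (B.support.erase 0).card + 1 := Finset.card_insert_le _ _
    _ = (B.support.card - 1) + 1 := by rw [Finset.card_erase_of_mem h0supp]
    _ ≤ B.support.card := by
        have : 1 ≤ B.support.card := Finset.card_pos.mpr ⟨0, h0supp⟩
        omega

lemma full_dvd (Q : Polynomial (ZMod 2)) (hfull : Q.natDegree + 1 ≤ Q.support.card) :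
    Q * (Polynomial.X + 1) = Polynomial.X ^ (Q.natDegree + 1) + 1 := by
  have hsub : Q.support = Finset.range (Q.natDegree + 1) :=
    Finset.eq_of_subset_of_card_le Q.supp_subset_range_natDegree_succ
      (by simpa using hfull)
  have hQeq : Q = ∑ i ∈ Finset.range (Q.natDegree + 1), Polynomial.X ^ i := by
    ext k
    rw [Polynomial.finset_sum_coeff]
    simp only [Polynomial.coeff_X_pow]
    rw [Finset.sum_ite_eq (Finset.range (Q.natDegree + 1)) k (fun _ => (1 : ZMod 2))]
    by_cases hk : k ∈ Finset.range (Q.natDegree + 1)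
    · rw [if_pos hk]
      have hks : k ∈ Q.support := hsub ▸ hk
      exact zmod2_eq_one _ (Polynomial.mem_support_iff.mp hks)
    · rw [if_neg hk]
      exact Polynomial.notMem_support_iff.mp (by rw [hsub]; exact hk)
  have hg := geom_sum_mul (Polynomial.X : Polynomial (ZMod 2)) (Q.natDegree + 1)
  rw [CharTwo.sub_eq_add, CharTwo.sub_eq_add] at hg
  calc Q * (Polynomial.X + 1)
      = (∑ i ∈ Finset.range (Q.natDegree + 1), Polynomial.X ^ i) * (Polynomial.X + 1) := by
        rw [← hQeq]
    _ = Polynomial.X ^ (Q.natDegree + 1) + 1 := hg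



/-- Let `P ∈ F₂[q]` with `P(0) = 1`, suppose `D := ord(P) ≥ 4`, and let `P*` satisfy
`P ⬝ P* = 1 + q^D`.  If `G`, `Gstar` are the inverses in `F₂[[q]]` of `P`, `P*`, then the
natural densities of the reciprocal sets `P̄ = {n : coeff n G = 1}` and
`P̄* = {n : coeff n Gstar = 1}` exist, and at least one of them is at most `1/2`. -/
theorem stmt11 (P Pstar : Polynomial (ZMod 2)) (hP0 : P.coeff 0 = 1)
    (D : ℕ) (hD4 : 4 ≤ D) (hDdvd : P ∣ (1 + Polynomial.X ^ D))
    (hDmin : ∀ e : ℕ, 1 ≤ e → P ∣ (1 + Polynomial.X ^ e) → D ≤ e)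
    (hPstar : P * Pstar = 1 + Polynomial.X ^ D)
    (G Gstar : PowerSeries (ZMod 2))
    (hG : (P : PowerSeries (ZMod 2)) * G = 1)
    (hGstar : (Pstar : PowerSeries (ZMod 2)) * Gstar = 1) :
    ∃ δP δPstar : ℝ,
      Filter.Tendsto
        (fun n : ℕ =>
          (((Finset.range (n + 1)).filter fun k => PowerSeries.coeff k G = 1).card : ℝ)
            / (n + 1)) Filter.atTop (nhds δP) ∧
      Filter.Tendsto
        (fun n : ℕ =>
          (((Finset.range (n + 1)).filter fun k =>
              PowerSeries.coeff k Gstar = 1).card : ℝ)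
            / (n + 1)) Filter.atTop (nhds δPstar) ∧
      min δP δPstar ≤ 1 / 2 := by
  have hD1 : 1 ≤ D := by omega
  obtain ⟨hperG, hcardG⟩ := ps_helper P Pstar D hD1 hPstar G hG
  obtain ⟨hperGs, hcardGs⟩ :=
    ps_helper Pstar P D hD1 (by rw [mul_comm]; exact hPstar) Gstar hGstar
  set cG := ((Finset.Icc 1 D).filter
    (fun k => PowerSeries.coeff k G = 1)).card with hcG
  set cGs := ((Finset.Icc 1 D).filter
    (fun k => PowerSeries.coeff k Gstar = 1)).card with hcGs
  refine ⟨(cG : ℝ) / D, (cGs : ℝ) / D,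
    density_periodic _ D (by omega) hperG,
    density_periodic _ D (by omega) hperGs, ?_⟩
  by_contra hlt
  push_neg at hlt
  rw [lt_min_iff] at hlt
  obtain ⟨hlt1, hlt2⟩ := hlt
  have hDpos : (0 : ℝ) < (D : ℝ) := by positivity
  rw [div_lt_div_iff₀ (by norm_num) hDpos] at hlt1 hlt2
  have hDcG : D < 2 * cG := by exact_mod_cast (by linarith : (D : ℝ) < 2 * cG)
  have hDcGs : D < 2 * cGs := by exact_mod_cast (by linarith : (D : ℝ) < 2 * cGs)
  -- polynomial degree bookkeeping
  have hne : (1 + Polynomial.X ^ D : Polynomial (ZMod 2)) ≠ 0 := by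
    intro hzero
    have h0 : (1 + Polynomial.X ^ D : Polynomial (ZMod 2)).coeff 0 = 1 := by
      simp [Polynomial.coeff_X_pow]
      omega
    rw [hzero] at h0
    simp at h0
  have hPne : P ≠ 0 := fun h => by simp [h] at hP0
  have hPsne : Pstar ≠ 0 := by
    intro h; rw [h, mul_zero] at hPstar; exact hne hPstar.symm
  have hdeg : P.natDegree + Pstar.natDegree = D := by
    have := Polynomial.natDegree_mul hPne hPsne
    rw [hPstar, add_comm (1 : Polynomial (ZMod 2)), ← Polynomial.C_1,
      Polynomial.natDegree_X_pow_add_C] at this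
    omega
  have hsuppP : P.support.card ≤ P.natDegree + 1 := Polynomial.card_supp_le_succ_natDegree P
  have hsuppPs : Pstar.support.card ≤ Pstar.natDegree + 1 :=
    Polynomial.card_supp_le_succ_natDegree Pstar
  by_cases hcase : 2 * P.natDegree ≤ D
  · -- P has full support
    have hfull : P.natDegree + 1 ≤ P.support.card := by omega
    have hmul := full_dvd P hfull
    have hdvd : P ∣ 1 + Polynomial.X ^ (P.natDegree + 1) :=
      ⟨Polynomial.X + 1, by rw [add_comm]; exact hmul.symm⟩
    have := hDmin (P.natDegree + 1) (by omega) hdvd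
    omega
  · -- Pstar has full support; 2e = D - 1
    have he : 2 * Pstar.natDegree = D - 1 := by omega
    have hfull : Pstar.natDegree + 1 ≤ Pstar.support.card := by omega
    have hmul := full_dvd Pstar hfull
    have hdvd1 : Pstar ∣ Polynomial.X ^ (Pstar.natDegree + 1) + 1 :=
      ⟨Polynomial.X + 1, hmul.symm⟩
    have hsq : ((Polynomial.X ^ (Pstar.natDegree + 1) + 1 : Polynomial (ZMod 2))) ^ 2
        = Polynomial.X ^ (D + 1) + 1 := by
      rw [CharTwo.add_sq, one_pow, ← pow_mul]
      have h21 : (Pstar.natDegree + 1) * 2 = D + 1 := by omega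
      rw [h21]
    have hdvd2 : Pstar ∣ Polynomial.X ^ (D + 1) + 1 := by
      rw [← hsq]
      exact dvd_pow hdvd1 two_ne_zero
    have hdvd3 : Pstar ∣ Polynomial.X ^ D + 1 :=
      ⟨P, by linear_combination -hPstar⟩
    have hdvd4 : Pstar ∣ (Polynomial.X + 1 : Polynomial (ZMod 2)) := by
      have h2 : (Polynomial.X ^ (D + 1) + Polynomial.X ^ (D + 1) : Polynomial (ZMod 2)) = 0 :=
        CharTwo.add_self_eq_zero _
      have hsum : (Polynomial.X + 1 : Polynomial (ZMod 2))
          = (Polynomial.X ^ (D + 1) + 1) + Polynomial.X * (Polynomial.X ^ D + 1) := by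
        linear_combination -h2
      rw [hsum]
      exact dvd_add hdvd2 (hdvd3.mul_left _)
    have hdegPs : Pstar.natDegree ≤ 1 := by
      have hx : (Polynomial.X + 1 : Polynomial (ZMod 2)) ≠ 0 := by
        intro hzero
        have h1 := congrArg (fun p => Polynomial.coeff p 1) hzero
        simp [Polynomial.coeff_one] at h1
      have hled := Polynomial.natDegree_le_of_dvd hdvd4 hx
      rwa [← Polynomial.C_1, Polynomial.natDegree_X_add_C] at hled
    omega
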